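/- The following are equivalent: (1) 2^ℵ0 > ℵ1; (2) for every ℵ0-coloring of the real numbers, there exist four pairwise distinct reals e1, e2, e3, e4 of the same color such that e1 + e2 = e3 + e4. -/

import Mathlib

open Cardinal

lemma li4 {ι : Type*} {y : ι → ℝ} (hy : LinearIndependent ℚ y) {a b c d : ι}
    (hab : a ≠ b) (hac : a ≠ c) (had : a ≠ d) (hbc : b ≠ c) (hbd : b ≠ d) (hcd : c ≠ d) :
    y a + y b ≠ y c + y d := by
  classical
  intro hsum
  have h0 : (∑ i ∈ ({a, b, c, d} : Finset ι),
      (if i = a ∨ i = b then (1 : ℚ) else -1) • y i) = 0 := by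
    rw [show ({a, b, c, d} : Finset ι) = insert a (insert b (insert c ({d} : Finset ι))) from rfl,
      Finset.sum_insert (by simp [hab, hac, had]),
      Finset.sum_insert (by simp [hbc, hbd]),
      Finset.sum_insert (by simp [hcd]), Finset.sum_singleton]
    rw [if_pos (Or.inl rfl), if_pos (Or.inr rfl),
      if_neg (not_or.mpr ⟨hac.symm, hbc.symm⟩), if_neg (not_or.mpr ⟨had.symm, hbd.symm⟩)]
    simp only [one_smul, neg_smul]
    linarith
  have := linearIndependent_iff'.mp hy _ _ h0 a (by simp)
  simp at this

lemma aleph_one_lt_two_pow_iff :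
    Cardinal.aleph.{u} 1 < (2 : Cardinal) ^ Cardinal.aleph0 ↔
    Cardinal.aleph.{0} 1 < (2 : Cardinal) ^ Cardinal.aleph0 := by
  rw [Cardinal.two_power_aleph0, Cardinal.two_power_aleph0,
    show Cardinal.aleph.{u} 1 = Cardinal.lift.{u} (Cardinal.aleph.{0} 1) by
      rw [Cardinal.lift_aleph, Ordinal.lift_one],
    ← Cardinal.lift_continuum.{u, 0}, Cardinal.lift_lt]

lemma fwd (h : Cardinal.aleph.{0} 1 < (2 : Cardinal) ^ Cardinal.aleph0) (COL : ℝ → ℕ) :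
    ∃ e1 e2 e3 e4 : ℝ,
      e1 ≠ e2 ∧ e1 ≠ e3 ∧ e1 ≠ e4 ∧ e2 ≠ e3 ∧ e2 ≠ e4 ∧ e3 ≠ e4 ∧
      COL e1 = COL e2 ∧ COL e2 = COL e3 ∧ COL e3 = COL e4 ∧
      e1 + e2 = e3 + e4 := by
  by_contra hcon
  push_neg at hcon
  -- get a big linearly independent set
  have h' : Cardinal.aleph 1 < Cardinal.continuum := by
    rw [← Cardinal.two_power_aleph0]; exact h
  have hrank : Order.succ (Cardinal.aleph 1) ≤ Module.rank ℚ ℝ := by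
    rw [Real.rank_rat_real]
    exact Order.succ_le_of_lt h'
  obtain ⟨s, hscard, hsli⟩ := le_rank_iff_exists_linearIndependent.mp hrank
  obtain ⟨t, htcard⟩ : ∃ t : Set ↥s, #t = Cardinal.aleph 1 :=
    Cardinal.le_mk_iff_exists_set.mp (hscard ▸ (Order.lt_succ (Cardinal.aleph 1)).le)
  have hBcard : Cardinal.aleph 1 < #↥(tᶜ) := by
    by_contra hb
    push_neg at hb
    have hsum := Cardinal.mk_sum_compl t
    have h1 : #(↥s) ≤ Cardinal.aleph 1 := by
      rw [← hsum, htcard]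
      calc Cardinal.aleph 1 + #↥(tᶜ) ≤ Cardinal.aleph 1 + Cardinal.aleph 1 :=
            add_le_add_right hb _
        _ = Cardinal.aleph 1 := Cardinal.add_eq_self (Cardinal.aleph0_le_aleph 1)
    exact (Order.lt_succ (Cardinal.aleph 1)).not_ge (hscard ▸ h1)
  -- pick pairs
  have hpick : ∀ v : ↥(tᶜ), ∃ x x' : ↥t, x ≠ x' ∧
      COL (((v : ↥s) : ℝ) + ((x : ↥s) : ℝ)) = COL (((v : ↥s) : ℝ) + ((x' : ↥s) : ℝ)) := by
    intro v
    by_contra hp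
    push_neg at hp
    have hinj : Function.Injective (fun x : ↥t => COL (((v : ↥s) : ℝ) + ((x : ↥s) : ℝ))) := by
      intro x x' hxx
      by_contra hne
      exact hp x x' hne hxx
    have hle := Cardinal.mk_le_of_injective hinj
    rw [htcard, Cardinal.mk_nat] at hle
    exact Cardinal.aleph0_lt_aleph_one.not_ge hle
  choose x1 x2 hx12 hcols using hpick
  have hφ : Function.Injective
      (fun v : ↥(tᶜ) => (x1 v, x2 v, COL (((v : ↥s) : ℝ) + ((x1 v : ↥s) : ℝ)))) := by
    intro v w hvw
    by_contra hne
    simp only [Prod.mk.injEq] at hvw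
    obtain ⟨h1, h2, h3⟩ := hvw
    have hvs : (v : ↥s) ≠ (w : ↥s) := fun hh => hne (Subtype.ext hh)
    have hvt : (v : ↥s) ∉ t := v.2
    have hwt : (w : ↥s) ∉ t := w.2
    have hva : (v : ↥s) ≠ ((x1 v : ↥s)) := fun hh => hvt (hh ▸ (x1 v).2)
    have hvb : (v : ↥s) ≠ ((x2 v : ↥s)) := fun hh => hvt (hh ▸ (x2 v).2)
    have hwa : (w : ↥s) ≠ ((x1 v : ↥s)) := fun hh => hwt (hh ▸ (x1 v).2)
    have hwb : (w : ↥s) ≠ ((x2 v : ↥s)) := fun hh => hwt (hh ▸ (x2 v).2)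
    have hab : ((x1 v : ↥s)) ≠ ((x2 v : ↥s)) := fun hh => hx12 v (Subtype.ext hh)
    have hcoe : Function.Injective (fun z : ↥s => (z : ℝ)) := Subtype.val_injective
    -- the four reals
    refine hcon (((v : ↥s) : ℝ) + ((x1 v : ↥s) : ℝ)) (((w : ↥s) : ℝ) + ((x2 v : ↥s) : ℝ))
      (((v : ↥s) : ℝ) + ((x2 v : ↥s) : ℝ)) (((w : ↥s) : ℝ) + ((x1 v : ↥s) : ℝ))
      ?_ ?_ ?_ ?_ ?_ ?_ ?_ ?_ ?_ (by ring)
    · exact li4 hsli hva hvs hvb hwa.symm hab hwb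
    · intro hh
      exact hab (hcoe (by linarith))
    · intro hh
      exact hvs (hcoe (by linarith))
    · intro hh
      exact hvs (hcoe (by linarith))
    · intro hh
      exact hab (hcoe (by linarith))
    · exact li4 hsli hvb hvs hva hwb.symm hab.symm hwa
    · -- COL e1 = COL e2
      rw [← h1] at h3
      have cB := hcols w
      rw [← h1, ← h2] at cB
      exact h3.trans cB
    · rw [← h1] at h3
      have cB := hcols w
      rw [← h1, ← h2] at cB
      exact cB.symm.trans (h3.symm.trans (hcols v))
    · rw [← h1] at h3
      exact (hcols v).symm.trans h3
  have hle := Cardinal.mk_le_of_injective hφ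
  have hT : #(↥t × ↥t × ℕ) = Cardinal.aleph 1 := by
    simp only [Cardinal.mk_prod, Cardinal.lift_id, htcard, Cardinal.mk_nat]
    have e1 : Cardinal.aleph 1 * ℵ₀ = Cardinal.aleph 1 := by
      rw [Cardinal.mul_eq_max (Cardinal.aleph0_le_aleph 1) le_rfl]
      exact max_eq_left (Cardinal.aleph0_le_aleph 1)
    rw [e1, Cardinal.mul_eq_self (Cardinal.aleph0_le_aleph 1)]
  rw [hT] at hle
  exact hBcard.not_ge hle

lemma bwd (hle : (2 : Cardinal) ^ Cardinal.aleph0 ≤ Cardinal.aleph.{0} 1) :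
    ∃ COL : ℝ → ℕ, ∀ e1 e2 e3 e4 : ℝ,
      e1 ≠ e2 → e1 ≠ e3 → e1 ≠ e4 → e2 ≠ e3 → e2 ≠ e4 → e3 ≠ e4 →
      COL e1 = COL e2 → COL e2 = COL e3 → COL e3 = COL e4 →
      e1 + e2 ≠ e3 + e4 := by
  classical
  set O := (Cardinal.aleph 1).ord.ToType with hO
  have hOcard : #O = Cardinal.aleph 1 := by
    rw [hO, Cardinal.mk_toType, Cardinal.card_ord]
  have hemb : Nonempty (ℝ ↪ O) := by
    rw [← Cardinal.le_def, Cardinal.mk_real, hOcard, ← Cardinal.two_power_aleph0]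
    exact hle
  obtain ⟨e⟩ := hemb
  set V : O → Submodule ℚ ℝ := fun i => Submodule.span ℚ {y : ℝ | e y ≤ i} with hV
  have hVmono : ∀ {i j : O}, i ≤ j → V i ≤ V j := fun hij =>
    Submodule.span_mono (fun y hy => le_trans hy hij)
  have hVcount : ∀ i : O, Countable (V i) := by
    intro i
    have hIio : #(Set.Iio i) < Cardinal.aleph 1 := Cardinal.mk_Iio_ord_toType i
    have hIioC : (Set.Iio i).Countable := (Cardinal.countable_iff_lt_aleph_one _).mpr hIio
    have hIicC : (Set.Iic i).Countable := by
      rw [← Set.Iio_insert]; exact hIioC.insert i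
    have hsetC : {y : ℝ | e y ≤ i}.Countable := hIicC.preimage e.injective
    have := hsetC.to_subtype
    show Countable (Submodule.span ℚ {y : ℝ | e y ≤ i})
    rw [show {y : ℝ | e y ≤ i} = Set.range (fun z : {y : ℝ | e y ≤ i} => (z : ℝ)) from
      Subtype.range_coe.symm]
    infer_instance
  have hmemself : ∀ x : ℝ, x ∈ V (e x) := fun x =>
    Submodule.subset_span (le_refl (e x))
  -- the level function
  have hwf : WellFounded ((· < ·) : O → O → Prop) := IsWellFounded.wf
  set lvl : ℝ → O := fun x => hwf.min {i | x ∈ V i} ⟨e x, hmemself x⟩ with hlvl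
  have hlvl_mem : ∀ x : ℝ, x ∈ V (lvl x) := fun x =>
    hwf.min_mem {i | x ∈ V i} ⟨e x, hmemself x⟩
  have hlvl_le : ∀ {x : ℝ} {i : O}, x ∈ V i → lvl x ≤ i := fun {x i} hx =>
    le_of_not_gt (hwf.not_lt_min {j | x ∈ V j} hx)
  -- injective-on-level functions
  have hinj : ∀ i : O, ∃ G : ℝ → ℕ, Set.InjOn G (V i) := by
    intro i
    have := hVcount i
    obtain ⟨g, hg⟩ := Countable.exists_injective_nat (V i)
    refine ⟨fun x => if h : x ∈ V i then g ⟨x, h⟩ else 0, ?_⟩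
    intro x hx y hy hxy
    simp only [SetLike.mem_coe] at hx hy
    simp only [dif_pos hx, dif_pos hy] at hxy
    exact congrArg Subtype.val (hg hxy)
  choose G hG using hinj
  refine ⟨fun x => G (lvl x) x, ?_⟩
  intro e1 e2 e3 e4 h12 h13 h14 h23 h24 h34 c12 c23 c34 hsum
  -- same color, same level implies equal
  have hA : ∀ {x y : ℝ}, G (lvl x) x = G (lvl y) y → lvl x = lvl y → x = y := by
    intro x y hc hl
    rw [hl] at hc
    exact hG (lvl y) (by rw [SetLike.mem_coe, ← hl]; exact hlvl_mem x)
      (by rw [SetLike.mem_coe]; exact hlvl_mem y) hc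
  have keyC : ∀ x u v w : ℝ, x = u + v - w →
      lvl u < lvl x → lvl v < lvl x → lvl w < lvl x → False := by
    intro x u v w hx hu hv hw
    set m := max (lvl u) (max (lvl v) (lvl w)) with hm
    have hum : u ∈ V m := hVmono (le_max_left _ _) (hlvl_mem u)
    have hvm : v ∈ V m :=
      hVmono (le_trans (le_max_left _ _) (le_max_right _ _)) (hlvl_mem v)
    have hwm : w ∈ V m :=
      hVmono (le_trans (le_max_right _ _) (le_max_right _ _)) (hlvl_mem w)
    have hxm : x ∈ V m := by rw [hx]; exact sub_mem (add_mem hum hvm) hwm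
    exact absurd (hlvl_le hxm) (not_le.mpr (max_lt hu (max_lt hv hw)))
  -- all pairwise colors equal
  have c13 : G (lvl e1) e1 = G (lvl e3) e3 := c12.trans c23
  have c14 : G (lvl e1) e1 = G (lvl e4) e4 := c13.trans c34
  have c24 : G (lvl e2) e2 = G (lvl e4) e4 := c23.trans c34
  -- pairwise distinct levels
  have l12 : lvl e1 ≠ lvl e2 := fun hl => h12 (hA c12 hl)
  have l13 : lvl e1 ≠ lvl e3 := fun hl => h13 (hA c13 hl)
  have l14 : lvl e1 ≠ lvl e4 := fun hl => h14 (hA c14 hl)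
  have l23 : lvl e2 ≠ lvl e3 := fun hl => h23 (hA c23 hl)
  have l24 : lvl e2 ≠ lvl e4 := fun hl => h24 (hA c24 hl)
  have l34 : lvl e3 ≠ lvl e4 := fun hl => h34 (hA c34 hl)
  -- one of the four levels dominates
  set l1 := lvl e1; set l2 := lvl e2; set l3 := lvl e3; set l4 := lvl e4
  have hmax : (l2 < l1 ∧ l3 < l1 ∧ l4 < l1) ∨ (l1 < l2 ∧ l3 < l2 ∧ l4 < l2) ∨
      (l1 < l3 ∧ l2 < l3 ∧ l4 < l3) ∨ (l1 < l4 ∧ l2 < l4 ∧ l3 < l4) := by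
    set m := max (max l1 l2) (max l3 l4) with hmdef
    have hm1 : l1 ≤ m := le_trans (le_max_left _ _) (le_max_left _ _)
    have hm2 : l2 ≤ m := le_trans (le_max_right _ _) (le_max_left _ _)
    have hm3 : l3 ≤ m := le_trans (le_max_left _ _) (le_max_right _ _)
    have hm4 : l4 ≤ m := le_trans (le_max_right _ _) (le_max_right _ _)
    have hm : m = l1 ∨ m = l2 ∨ m = l3 ∨ m = l4 := by
      rcases max_choice (max l1 l2) (max l3 l4) with h | h <;> rw [hmdef, h]
      · rcases max_choice l1 l2 with h' | h' <;> rw [h']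
        · exact Or.inl rfl
        · exact Or.inr (Or.inl rfl)
      · rcases max_choice l3 l4 with h' | h' <;> rw [h']
        · exact Or.inr (Or.inr (Or.inl rfl))
        · exact Or.inr (Or.inr (Or.inr rfl))
    rcases hm with h | h | h | h
    · exact Or.inl ⟨lt_of_le_of_ne (h ▸ hm2) l12.symm, lt_of_le_of_ne (h ▸ hm3) l13.symm,
        lt_of_le_of_ne (h ▸ hm4) l14.symm⟩
    · exact Or.inr (Or.inl ⟨lt_of_le_of_ne (h ▸ hm1) l12, lt_of_le_of_ne (h ▸ hm3) l23.symm,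
        lt_of_le_of_ne (h ▸ hm4) l24.symm⟩)
    · exact Or.inr (Or.inr (Or.inl ⟨lt_of_le_of_ne (h ▸ hm1) l13,
        lt_of_le_of_ne (h ▸ hm2) l23, lt_of_le_of_ne (h ▸ hm4) l34.symm⟩))
    · exact Or.inr (Or.inr (Or.inr ⟨lt_of_le_of_ne (h ▸ hm1) l14,
        lt_of_le_of_ne (h ▸ hm2) l24, lt_of_le_of_ne (h ▸ hm3) l34⟩))
  rcases hmax with ⟨ha, hb, hc⟩ | ⟨ha, hb, hc⟩ | ⟨ha, hb, hc⟩ | ⟨ha, hb, hc⟩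
  · exact keyC e1 e3 e4 e2 (by linarith) hb hc ha
  · exact keyC e2 e3 e4 e1 (by linarith) hb hc ha
  · exact keyC e3 e1 e2 e4 (by linarith) ha hb hc
  · exact keyC e4 e1 e2 e3 (by linarith) ha hb hc

/-- `2^ℵ₀ > ℵ₁` iff every `ℵ₀`-coloring of `ℝ` admits four pairwise distinct
monochromatic reals with `e1 + e2 = e3 + e4`. -/
theorem S_iff_not_CH :
    Cardinal.aleph 1 < (2 : Cardinal) ^ Cardinal.aleph0 ↔
    ∀ COL : ℝ → ℕ,
      ∃ e1 e2 e3 e4 : ℝ,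
        e1 ≠ e2 ∧ e1 ≠ e3 ∧ e1 ≠ e4 ∧ e2 ≠ e3 ∧ e2 ≠ e4 ∧ e3 ≠ e4 ∧
        COL e1 = COL e2 ∧ COL e2 = COL e3 ∧ COL e3 = COL e4 ∧
        e1 + e2 = e3 + e4 := by
  rw [aleph_one_lt_two_pow_iff]
  constructor
  · exact fwd
  · intro hR
    by_contra hch
    obtain ⟨COL, hCOL⟩ := bwd (le_of_not_gt hch)
    obtain ⟨e1, e2, e3, e4, a1, a2, a3, a4, a5, a6, b1, b2, b3, hs⟩ := hR COL
    exact hCOL e1 e2 e3 e4 a1 a2 a3 a4 a5 a6 b1 b2 b3 hs
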